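/- arXiv:1604.08733 — 2 statements merged into one kernel-verified Lean document; each statement's English description precedes it below -/
import Mathlib

section
/- Let D be a strongly connected balanced bipartite digraph of order 2a ≥ 8 with partite sets X and Y. If max{d(x), d(y)} ≥ 2a − 1 for every dominating pair of vertices {x, y}, then the underlying undirected graph UG(D) is 2-connected. -/
open Finset

variable {V : Type*}

/-- Total degree (out-degree plus in-degree) of `x` in the digraph with arc relation `A`. -/
noncomputable def deg (A : V → V → Prop) (x : V) : ℕ :=
  Set.ncard {y | A x y} + Set.ncard {y | A y x}

/-- The digraph with arc relation `A` is strongly connected. -/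
def StrongConn (A : V → V → Prop) : Prop :=
  ∀ u v : V, Relation.ReflTransGen A u v

/-- `{x, y}` is a dominating pair: distinct vertices with a common out-neighbour. -/
def DomPair (A : V → V → Prop) (x y : V) : Prop :=
  x ≠ y ∧ ∃ z, A x z ∧ A y z

/-- `X, Y` is a bipartition of the digraph `A`: the two parts partition the vertex
set and every arc joins the two parts. -/
def IsBipartition (A : V → V → Prop) (X Y : Set V) : Prop :=
  Disjoint X Y ∧ X ∪ Y = Set.univ ∧
    ∀ u v, A u v → (u ∈ X ∧ v ∈ Y) ∨ (u ∈ Y ∧ v ∈ X)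

/-- The underlying undirected graph of the digraph `A`. -/
def UG (A : V → V → Prop) : SimpleGraph V where
  Adj u v := u ≠ v ∧ (A u v ∨ A v u)
  symm := by constructor; intro u v h; exact ⟨h.1.symm, h.2.symm⟩
  loopless := by constructor; intro v h; exact h.1 rfl

/-- A graph on a finite vertex set is 2-connected if it has at least 3 vertices and
deleting any single vertex leaves a connected graph. -/
def TwoConnected [Fintype V] (G : SimpleGraph V) : Prop :=
  3 ≤ Fintype.card V ∧ ∀ v : V, (G.induce {u : V | u ≠ v}).Connected

private lemma cross_out {A : V → V → Prop} {S : Set V} {s t : V}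
    (h : Relation.ReflTransGen A s t) : s ∈ S → t ∉ S → ∃ p ∈ S, ∃ q, q ∉ S ∧ A p q := by
  induction h with
  | refl => intro hs ht; exact absurd hs ht
  | @tail b c h1 h2 ih =>
      intro hs ht
      by_cases hb : b ∈ S
      · exact ⟨b, hb, c, ht, h2⟩
      · exact ih hs hb

private lemma deg_le [Fintype V] {A : V → V → Prop} {u : V} {N M : Set V}
    (h1 : {y | A u y} ⊆ N) (h2 : {y | A y u} ⊆ M) :
    deg A u ≤ N.ncard + M.ncard :=
  add_le_add (Set.ncard_le_ncard h1 N.toFinite) (Set.ncard_le_ncard h2 M.toFinite)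

/-- From strong connectivity and a separation `(S, T)` around `v`, some vertex of `S`
sends an arc to `v`. -/
private lemma arc_to_v {A : V → V → Prop} (hstrong : StrongConn A) {v : V} {S T : Set V}
    (hd : ∀ u, u ∈ S → u ∉ T) (hcov : ∀ u, u ≠ v → u ∈ S ∨ u ∈ T)
    (hnoarc : ∀ p, p ∈ S → ∀ q, q ∈ T → ¬ A p q ∧ ¬ A q p)
    (hSne : S.Nonempty) (hTne : T.Nonempty) :
    ∃ p ∈ S, A p v := by
  obtain ⟨s, hs⟩ := hSne
  obtain ⟨t, ht⟩ := hTne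
  have htS : t ∉ S := fun h => hd t h ht
  obtain ⟨p, hp, q, hq, harc⟩ := cross_out (hstrong s t) hs htS
  by_cases hqv : q = v
  · exact ⟨p, hp, hqv ▸ harc⟩
  · rcases hcov q hqv with h | h
    · exact absurd h hq
    · exact absurd harc (hnoarc p hp q h).1

/-- The key contradiction: a separation `(S, T)` around `v ∈ X` where `T` avoids `X`
is impossible. -/
private lemma sep_aux [Fintype V] (A : V → V → Prop) (X Y : Set V) (a : ℕ) (ha : 4 ≤ a)
    (hX : X.ncard = a) (hY : Y.ncard = a) (hbip : IsBipartition A X Y)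
    (hstrong : StrongConn A)
    (hdeg : ∀ x y : V, DomPair A x y → 2 * a - 1 ≤ max (deg A x) (deg A y))
    (v : V) (hvX : v ∈ X) (S T : Set V)
    (hvS : v ∉ S) (hvT : v ∉ T) (hd : ∀ u, u ∈ S → u ∉ T)
    (hcov : ∀ u, u ≠ v → u ∈ S ∨ u ∈ T)
    (hnoarc : ∀ p, p ∈ S → ∀ q, q ∈ T → ¬ A p q ∧ ¬ A q p)
    (hSne : S.Nonempty) (hTne : T.Nonempty)
    (hTX : ∀ u, u ∈ T → u ∉ X) : False := by
  obtain ⟨hdisj, hunion, harcs⟩ := hbip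
  have hvY : v ∉ Y := Set.disjoint_left.mp hdisj hvX
  -- a vertex of S with arc to v
  obtain ⟨yS, hySS, hySv⟩ := arc_to_v hstrong hd hcov hnoarc hSne hTne
  -- a vertex of T with arc to v
  have hd' : ∀ u, u ∈ T → u ∉ S := fun u huT huS => hd u huS huT
  have hcov' : ∀ u, u ≠ v → u ∈ T ∨ u ∈ S := fun u hu => (hcov u hu).symm
  have hnoarc' : ∀ p, p ∈ T → ∀ q, q ∈ S → ¬ A p q ∧ ¬ A q p :=
    fun p hp q hq => ⟨(hnoarc q hq p hp).2, (hnoarc q hq p hp).1⟩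
  obtain ⟨yT, hyTT, hyTv⟩ := arc_to_v hstrong hd' hcov' hnoarc' hTne hSne
  -- both are in Y
  have hySY : yS ∈ Y := by
    rcases harcs yS v hySv with ⟨_, h⟩ | ⟨h, _⟩
    · exact absurd h hvY
    · exact h
  have hyTY : yT ∈ Y := by
    rcases harcs yT v hyTv with ⟨_, h⟩ | ⟨h, _⟩
    · exact absurd h hvY
    · exact h
  have hySX : yS ∉ X := Set.disjoint_right.mp hdisj hySY
  have hyTX' : yT ∉ X := Set.disjoint_right.mp hdisj hyTY
  have hne : yT ≠ yS := fun h => hd yS hySS (h ▸ hyTT)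
  have hmax := hdeg yT yS ⟨hne, v, hyTv, hySv⟩
  -- deg yT ≤ 2 : all neighbours of yT equal v
  have hTnb : ∀ z, (A yT z ∨ A z yT) → z = v := by
    intro z hz
    have hzX : z ∈ X := by
      rcases hz with hz | hz
      · rcases harcs yT z hz with ⟨h, _⟩ | ⟨_, h⟩
        · exact absurd h hyTX'
        · exact h
      · rcases harcs z yT hz with ⟨h, _⟩ | ⟨_, h⟩
        · exact h
        · exact absurd h hyTX'
    by_contra hzv
    rcases hcov z hzv with h | h
    · rcases hz with hz | hz
      · exact (hnoarc z h yT hyTT).2 hz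
      · exact (hnoarc z h yT hyTT).1 hz
    · exact hTX z h hzX
  have h1 : deg A yT ≤ 2 := by
    have := deg_le (A := A) (u := yT) (N := {v}) (M := {v})
      (fun z hz => hTnb z (Or.inl hz)) (fun z hz => hTnb z (Or.inr hz))
    simpa using this
  -- in-neighbours of yS inside S form a subsingleton
  have hsub : ({z | A z yS} ∩ S).Subsingleton := by
    intro x hx x' hx'
    by_contra hxx
    have hbound : ∀ w, w ∈ S → w ∈ {z | A z yS} → deg A w ≤ 2 * a - 2 := by
      intro w hwS hw
      have hwX : w ∈ X := by
        rcases harcs w yS hw with ⟨h, _⟩ | ⟨_, h⟩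
        · exact h
        · exact absurd h hySX
      have hwY : w ∉ Y := Set.disjoint_left.mp hdisj hwX
      have hnb : ∀ z, (A w z ∨ A z w) → z ∈ Y \ {yT} := by
        intro z hz
        have hzY : z ∈ Y := by
          rcases hz with hz | hz
          · rcases harcs w z hz with ⟨_, h⟩ | ⟨h, _⟩
            · exact h
            · exact absurd h hwY
          · rcases harcs z w hz with ⟨_, h⟩ | ⟨h, _⟩
            · exact absurd h hwY
            · exact h
        refine ⟨hzY, ?_⟩
        intro hzyT
        simp only [Set.mem_singleton_iff] at hzyT
        subst hzyT
        rcases hz with hz | hz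
        · exact (hnoarc w hwS z hyTT).1 hz
        · exact (hnoarc w hwS z hyTT).2 hz
      have hcard : (Y \ {yT}).ncard = a - 1 := by
        rw [Set.ncard_diff_singleton_of_mem hyTY, hY]
      have := deg_le (A := A) (u := w) (N := Y \ {yT}) (M := Y \ {yT})
        (fun z hz => hnb z (Or.inl hz)) (fun z hz => hnb z (Or.inr hz))
      omega
    have hdom := hdeg x x' ⟨hxx, yS, hx.1, hx'.1⟩
    have hb1 := hbound x hx.2 hx.1
    have hb2 := hbound x' hx'.2 hx'.1
    have : max (deg A x) (deg A x') ≤ 2 * a - 2 := max_le hb1 hb2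
    omega
  -- deg yS ≤ a + 2
  have hin : {z | A z yS} ⊆ insert v ({z | A z yS} ∩ S) := by
    intro z hz
    have hzX : z ∈ X := by
      rcases harcs z yS hz with ⟨h, _⟩ | ⟨_, h⟩
      · exact h
      · exact absurd h hySX
    by_cases hzv : z = v
    · exact Or.inl hzv
    · rcases hcov z hzv with h | h
      · exact Or.inr ⟨hz, h⟩
      · exact absurd hzX (hTX z h)
  have hout : {z | A yS z} ⊆ X := by
    intro z hz
    rcases harcs yS z hz with ⟨h, _⟩ | ⟨_, h⟩
    · exact absurd h hySX
    · exact h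
  have h2 : deg A yS ≤ a + 2 := by
    have hle := deg_le (A := A) (u := yS) (N := X) (M := insert v ({z | A z yS} ∩ S))
      hout hin
    have hc1 : (insert v ({z | A z yS} ∩ S)).ncard ≤ ({z | A z yS} ∩ S).ncard + 1 :=
      Set.ncard_insert_le _ _
    have hc2 : ({z | A z yS} ∩ S).ncard ≤ 1 :=
      (Set.ncard_le_one (Set.toFinite _)).mpr (fun _ ha _ hb => hsub ha hb)
    omega
  rcases le_max_iff.mp hmax with h | h <;> omega

/-- A separation around `v ∈ X` is impossible. -/
private lemma sep_false [Fintype V] (A : V → V → Prop) (X Y : Set V) (a : ℕ) (ha : 4 ≤ a)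
    (hX : X.ncard = a) (hY : Y.ncard = a) (hbip : IsBipartition A X Y)
    (hstrong : StrongConn A)
    (hdeg : ∀ x y : V, DomPair A x y → 2 * a - 1 ≤ max (deg A x) (deg A y))
    (v : V) (hvX : v ∈ X) (S T : Set V)
    (hvS : v ∉ S) (hvT : v ∉ T) (hd : ∀ u, u ∈ S → u ∉ T)
    (hcov : ∀ u, u ≠ v → u ∈ S ∨ u ∈ T)
    (hnoarc : ∀ p, p ∈ S → ∀ q, q ∈ T → ¬ A p q ∧ ¬ A q p)
    (hSne : S.Nonempty) (hTne : T.Nonempty) : False := by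
  obtain ⟨hdisj, hunion, harcs⟩ := hbip
  have hvY : v ∉ Y := Set.disjoint_left.mp hdisj hvX
  obtain ⟨yS, hySS, hySv⟩ := arc_to_v hstrong hd hcov hnoarc hSne hTne
  have hd' : ∀ u, u ∈ T → u ∉ S := fun u huT huS => hd u huS huT
  have hcov' : ∀ u, u ≠ v → u ∈ T ∨ u ∈ S := fun u hu => (hcov u hu).symm
  have hnoarc' : ∀ p, p ∈ T → ∀ q, q ∈ S → ¬ A p q ∧ ¬ A q p :=
    fun p hp q hq => ⟨(hnoarc q hq p hp).2, (hnoarc q hq p hp).1⟩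
  obtain ⟨yT, hyTT, hyTv⟩ := arc_to_v hstrong hd' hcov' hnoarc' hTne hSne
  have hySY : yS ∈ Y := by
    rcases harcs yS v hySv with ⟨_, h⟩ | ⟨h, _⟩
    · exact absurd h hvY
    · exact h
  have hyTY : yT ∈ Y := by
    rcases harcs yT v hyTv with ⟨_, h⟩ | ⟨h, _⟩
    · exact absurd h hvY
    · exact h
  have hySX : yS ∉ X := Set.disjoint_right.mp hdisj hySY
  have hyTX : yT ∉ X := Set.disjoint_right.mp hdisj hyTY
  have hne : yS ≠ yT := fun h => hd yS hySS (h ▸ hyTT)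
  have hmax := hdeg yS yT ⟨hne, v, hySv, hyTv⟩
  -- generic bound: deg of a Y-vertex of a side is ≤ 2*(|side ∩ X| + 1)
  have hbd : ∀ (P Q : Set V), (∀ p, p ∈ P → ∀ q, q ∈ Q → ¬ A p q ∧ ¬ A q p) →
      (∀ u, u ≠ v → u ∈ P ∨ u ∈ Q) →
      ∀ w, w ∈ P → w ∉ X → deg A w ≤ 2 * ((P ∩ X).ncard + 1) := by
    intro P Q hno hcv w hwP hwX
    have hnb : ∀ z, (A w z ∨ A z w) → z ∈ insert v (P ∩ X) := by
      intro z hz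
      have hzX : z ∈ X := by
        rcases hz with hz | hz
        · rcases harcs w z hz with ⟨h, _⟩ | ⟨_, h⟩
          · exact absurd h hwX
          · exact h
        · rcases harcs z w hz with ⟨h, _⟩ | ⟨_, h⟩
          · exact h
          · exact absurd h hwX
      by_cases hzv : z = v
      · exact Or.inl hzv
      · rcases hcv z hzv with h | h
        · exact Or.inr ⟨h, hzX⟩
        · rcases hz with hz | hz
          · exact absurd hz (hno w hwP z h).1
          · exact absurd hz (hno w hwP z h).2
    have hle := deg_le (A := A) (u := w) (N := insert v (P ∩ X)) (M := insert v (P ∩ X))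
      (fun z hz => hnb z (Or.inl hz)) (fun z hz => hnb z (Or.inr hz))
    have hc : (insert v (P ∩ X)).ncard ≤ (P ∩ X).ncard + 1 := Set.ncard_insert_le _ _
    omega
  have hbS := hbd S T hnoarc hcov yS hySS hySX
  have hbT := hbd T S hnoarc' hcov' yT hyTT hyTX
  -- |S∩X| + |T∩X| ≤ a - 1
  have hsum : (S ∩ X).ncard + (T ∩ X).ncard ≤ a - 1 := by
    have hdj : Disjoint (S ∩ X) (T ∩ X) :=
      Set.disjoint_left.mpr fun u hu hu' => hd u hu.1 hu'.1
    have hsubu : (S ∩ X) ∪ (T ∩ X) ⊆ X \ {v} := by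
      rintro u (⟨huS, huX⟩ | ⟨huT, huX⟩)
      · exact ⟨huX, fun h => hvS (Set.mem_singleton_iff.mp h ▸ huS)⟩
      · exact ⟨huX, fun h => hvT (Set.mem_singleton_iff.mp h ▸ huT)⟩
    have h1 : ((S ∩ X) ∪ (T ∩ X)).ncard = (S ∩ X).ncard + (T ∩ X).ncard :=
      Set.ncard_union_eq hdj (Set.toFinite _) (Set.toFinite _)
    have h2 : ((S ∩ X) ∪ (T ∩ X)).ncard ≤ (X \ {v}).ncard :=
      Set.ncard_le_ncard hsubu (Set.toFinite _)
    have h3 : (X \ {v}).ncard = a - 1 := by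
      rw [Set.ncard_diff_singleton_of_mem hvX, hX]
    omega
  -- dichotomy
  have hrebip : IsBipartition A X Y := ⟨hdisj, hunion, harcs⟩
  rcases le_max_iff.mp hmax with h | h
  · -- deg yS large ⇒ T ∩ X = ∅
    have hTX : ∀ u, u ∈ T → u ∉ X := by
      have : (T ∩ X).ncard = 0 := by omega
      have he : T ∩ X = ∅ := (Set.ncard_eq_zero (Set.toFinite _)).mp this
      intro u huT huX
      have hmem : u ∈ T ∩ X := ⟨huT, huX⟩
      rw [he] at hmem
      exact Set.notMem_empty u hmem
    exact sep_aux A X Y a ha hX hY hrebip hstrong hdeg v hvX S T hvS hvT hd hcov hnoarc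
      hSne hTne hTX
  · -- deg yT large ⇒ S ∩ X = ∅
    have hSX : ∀ u, u ∈ S → u ∉ X := by
      have : (S ∩ X).ncard = 0 := by omega
      have he : S ∩ X = ∅ := (Set.ncard_eq_zero (Set.toFinite _)).mp this
      intro u huS huX
      have hmem : u ∈ S ∩ X := ⟨huS, huX⟩
      rw [he] at hmem
      exact Set.notMem_empty u hmem
    exact sep_aux A X Y a ha hX hY hrebip hstrong hdeg v hvX T S hvT hvS hd' hcov' hnoarc'
      hTne hSne hSX

/-- If `D` is a strongly connected balanced bipartite digraph of order `2a ≥ 8` and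
`max {d(x), d(y)} ≥ 2a − 1` for every dominating pair `{x, y}`, then `UG(D)` is
2-connected. -/
theorem stmt1 [Fintype V] (A : V → V → Prop) (X Y : Set V) (a : ℕ) (ha : 4 ≤ a)
    (hX : X.ncard = a) (hY : Y.ncard = a) (hbip : IsBipartition A X Y)
    (hstrong : StrongConn A)
    (hdeg : ∀ x y : V, DomPair A x y → 2 * a - 1 ≤ max (deg A x) (deg A y)) :
    TwoConnected (UG A) := by
  have hcard : 3 ≤ Fintype.card V := by
    have h1 : (Set.univ : Set V).ncard = X.ncard + Y.ncard := by
      rw [← hbip.2.1]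
      exact Set.ncard_union_eq hbip.1 X.toFinite Y.toFinite
    have h2 : (Set.univ : Set V).ncard = Fintype.card V := by
      rw [Set.ncard_univ, Nat.card_eq_fintype_card]
    omega
  refine ⟨hcard, ?_⟩
  intro v
  by_contra hcon
  -- nonempty vertex set after deletion
  have hnt : Nontrivial V := Fintype.one_lt_card_iff_nontrivial.mp (by omega)
  obtain ⟨u0, hu0⟩ := exists_ne v
  have hne : Nonempty {u : V | u ≠ v} := ⟨⟨u0, hu0⟩⟩
  rw [SimpleGraph.connected_iff, not_and_or] at hcon
  have hpre : ¬ ((UG A).induce {u : V | u ≠ v}).Preconnected := by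
    rcases hcon with h | h
    · exact h
    · exact absurd hne h
  obtain ⟨s, t, hst⟩ : ∃ s t, ¬ ((UG A).induce {u : V | u ≠ v}).Reachable s t := by
    by_contra h
    push_neg at h
    exact hpre fun u w => h u w
  set G' := (UG A).induce {u : V | u ≠ v} with hG'
  set S : Set V := {u : V | ∃ h : u ≠ v, G'.Reachable s ⟨u, h⟩} with hS
  set T : Set V := {u : V | u ≠ v ∧ u ∉ S} with hT
  have hvS : v ∉ S := fun ⟨h, _⟩ => h rfl
  have hvT : v ∉ T := fun ⟨h, _⟩ => h rfl
  have hd : ∀ u, u ∈ S → u ∉ T := fun u huS huT => huT.2 huS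
  have hcov : ∀ u, u ≠ v → u ∈ S ∨ u ∈ T := by
    intro u hu
    by_cases h : u ∈ S
    · exact Or.inl h
    · exact Or.inr ⟨hu, h⟩
  have hSne : S.Nonempty := ⟨s.1, s.2, SimpleGraph.Reachable.refl s⟩
  have hTne : T.Nonempty := ⟨t.1, t.2, fun ⟨h, hr⟩ => hst hr⟩
  have hnoloop : ∀ u, ¬ A u u := by
    intro u hu
    rcases hbip.2.2 u u hu with ⟨h1, h2⟩ | ⟨h1, h2⟩
    · exact Set.disjoint_left.mp hbip.1 h1 h2
    · exact Set.disjoint_left.mp hbip.1 h2 h1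
  have hnoarc : ∀ p, p ∈ S → ∀ q, q ∈ T → ¬ A p q ∧ ¬ A q p := by
    intro p hp q hq
    obtain ⟨hpv, hreach⟩ := hp
    have key : ∀ (harc : A p q ∨ A q p), False := by
      intro harc
      have hpq : p ≠ q := by
        rintro rfl
        rcases harc with h | h <;> exact hnoloop p h
      have hadj : (UG A).Adj p q := ⟨hpq, harc⟩
      have hadj' : G'.Adj ⟨p, hpv⟩ ⟨q, hq.1⟩ := hadj
      exact hq.2 ⟨hq.1, hreach.trans hadj'.reachable⟩
    exact ⟨fun h => key (Or.inl h), fun h => key (Or.inr h)⟩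
  have hv : v ∈ X ∪ Y := by rw [hbip.2.1]; exact Set.mem_univ v
  rcases hv with hvX | hvY
  · exact sep_false A X Y a ha hX hY hbip hstrong hdeg v hvX S T hvS hvT hd hcov hnoarc
      hSne hTne
  · have hbip' : IsBipartition A Y X :=
      ⟨hbip.1.symm, by rw [Set.union_comm]; exact hbip.2.1,
        fun u w h => (hbip.2.2 u w h).symm⟩
    exact sep_false A Y X a ha hY hX hbip' hstrong hdeg v hvY S T hvS hvT hd hcov hnoarc
      hSne hTne
end

section
/- For every a ≥ 4 there exists a strongly connected balanced bipartite digraph D of order 2a satisfying max{d(x), d(y)} ≥ 2a − 2 for every dominating pair of vertices {x, y}, whose underlying undirected graph is not 2-connected. (Hence condition B_1 in the 2-connectivity lemma cannot be weakened to B_0.) -/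
open Finset

variable {V : Type*}

def Arc (a : ℕ) (u v : Fin (2 * a)) : Prop :=
  ((u : ℕ) ≠ 0 ∧ (u : ℕ) ≠ a ∧ (v : ℕ) ≠ 0 ∧ (v : ℕ) ≠ a ∧
    ((u : ℕ) < a ∧ a ≤ (v : ℕ) ∨ a ≤ (u : ℕ) ∧ (v : ℕ) < a))
  ∨ ((u : ℕ) = 0 ∧ (v : ℕ) = a) ∨ ((u : ℕ) = a ∧ (v : ℕ) = 0)
  ∨ ((u : ℕ) = 0 ∧ (v : ℕ) = a + 1) ∨ ((u : ℕ) = a + 1 ∧ (v : ℕ) = 0)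

lemma arc_symm (a : ℕ) : Symmetric (Arc a) := by
  intro u v h; unfold Arc at *; tauto

lemma ncard_interval (n l u : ℕ) (h1 : l ≤ u) (h2 : u ≤ n) :
    ({v : Fin n | l ≤ (v : ℕ) ∧ (v : ℕ) < u}).ncard = u - l := by
  rw [← Nat.card_coe_set_eq]
  rw [Nat.card_congr (show {v : Fin n | l ≤ (v : ℕ) ∧ (v : ℕ) < u} ≃ Fin (u - l) from
    { toFun := fun v => ⟨(v : Fin n).1 - l, by have := v.2; simp only [Set.mem_setOf_eq] at this; omega⟩
      invFun := fun i => ⟨⟨l + i.1, by have := i.2; omega⟩, by simp only [Set.mem_setOf_eq]; have := i.2; omega⟩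
      left_inv := fun v => by
        ext
        have := v.2; simp only [Set.mem_setOf_eq] at this
        simp; omega
      right_inv := fun i => by ext; simp })]
  simp

lemma deg_big (a : ℕ) (ha : 4 ≤ a) (w : Fin (2 * a)) (h0 : (w : ℕ) ≠ 0)
    (hA : (w : ℕ) ≠ a) : 2 * a - 2 ≤ deg (Arc a) w := by
  have key : ∀ S : Set (Fin (2 * a)), S.ncard = a - 1 →
      S ⊆ {y | Arc a w y} → S ⊆ {y | Arc a y w} → 2 * a - 2 ≤ deg (Arc a) w := by
    intro S hS h1 h2
    have c1 := Set.ncard_le_ncard h1 (Set.toFinite _)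
    have c2 := Set.ncard_le_ncard h2 (Set.toFinite _)
    unfold deg
    omega
  rcases lt_or_ge (w : ℕ) a with hw | hw
  · refine key {v : Fin (2 * a) | a + 1 ≤ (v : ℕ) ∧ (v : ℕ) < 2 * a} ?_ ?_ ?_
    · rw [ncard_interval _ _ _ (by omega) (by omega)]; omega
    · intro v hv
      simp only [Set.mem_setOf_eq] at hv ⊢
      unfold Arc; omega
    · intro v hv
      simp only [Set.mem_setOf_eq] at hv ⊢
      unfold Arc; omega
  · refine key {v : Fin (2 * a) | 1 ≤ (v : ℕ) ∧ (v : ℕ) < a} ?_ ?_ ?_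
    · rw [ncard_interval _ _ _ (by omega) (by omega)]
    · intro v hv
      simp only [Set.mem_setOf_eq] at hv ⊢
      unfold Arc; omega
    · intro v hv
      simp only [Set.mem_setOf_eq] at hv ⊢
      unfold Arc; omega

lemma reach_from_zero (a : ℕ) (ha : 4 ≤ a) (v : Fin (2 * a)) :
    Relation.ReflTransGen (Arc a) ⟨0, by omega⟩ v := by
  have hv := v.2
  have e1 : Arc a ⟨0, by omega⟩ ⟨a + 1, by omega⟩ := by
    unfold Arc; simp only [Fin.val_mk]; first | omega | tauto
  have e2 : Arc a ⟨a + 1, by omega⟩ ⟨1, by omega⟩ := by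
    unfold Arc; simp only [Fin.val_mk]; first | omega | tauto
  rcases Nat.lt_or_ge (v : ℕ) 1 with h | h
  · have : v = ⟨0, by omega⟩ := Fin.ext (by simp only [Fin.val_mk]; omega)
    rw [this]
  rcases Nat.lt_or_ge (v : ℕ) a with h2 | h2
  · -- 0 → a+1 → v
    have e3 : Arc a ⟨a + 1, by omega⟩ v := by
      unfold Arc; simp only [Fin.val_mk]; omega
    exact Relation.ReflTransGen.tail (Relation.ReflTransGen.single e1) e3
  rcases Nat.eq_or_lt_of_le h2 with h3 | h3
  · have : v = ⟨a, by omega⟩ := Fin.ext (by simp only [Fin.val_mk]; omega)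
    rw [this]
    exact Relation.ReflTransGen.single
      (by unfold Arc; simp only [Fin.val_mk]; first | omega | tauto)
  rcases Nat.eq_or_lt_of_le h3 with h4 | h4
  · have : v = ⟨a + 1, by omega⟩ := Fin.ext (by simp only [Fin.val_mk]; omega)
    rw [this]
    exact Relation.ReflTransGen.single
      (by unfold Arc; simp only [Fin.val_mk]; first | omega | tauto)
  · -- 0 → a+1 → 1 → v
    have e3 : Arc a ⟨1, by omega⟩ v := by
      unfold Arc; simp only [Fin.val_mk]; omega
    exact Relation.ReflTransGen.tail
      (Relation.ReflTransGen.tail (Relation.ReflTransGen.single e1) e2) e3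

lemma isolated_eq {W : Type*} {G : SimpleGraph W} {v u : W}
    (h : ∀ w, ¬ G.Adj v w) (hr : G.Reachable v u) : v = u := by
  obtain ⟨p⟩ := hr
  cases p with
  | nil => rfl
  | cons h' _ => exact absurd h' (h _)

theorem stmt_aux (a : ℕ) (ha : 4 ≤ a) :
    ∃ (A : Fin (2 * a) → Fin (2 * a) → Prop) (X Y : Set (Fin (2 * a))),
      (Disjoint X Y ∧ X ∪ Y = Set.univ ∧
        ∀ u v, A u v → (u ∈ X ∧ v ∈ Y) ∨ (u ∈ Y ∧ v ∈ X)) ∧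
      X.ncard = a ∧ Y.ncard = a ∧
      (∀ u v : Fin (2 * a), Relation.ReflTransGen A u v) ∧
      (∀ x y, (x ≠ y ∧ ∃ z, A x z ∧ A y z) → 2 * a - 2 ≤ max (deg A x) (deg A y)) ∧
      ¬ (3 ≤ Fintype.card (Fin (2 * a)) ∧
          ∀ v : Fin (2 * a),
            (SimpleGraph.induce {u : Fin (2 * a) | u ≠ v}
              ⟨fun u v => u ≠ v ∧ (A u v ∨ A v u),
               by constructor; intro u v h; exact ⟨h.1.symm, h.2.symm⟩,
               by constructor; intro v h; exact h.1 rfl⟩).Connected) := by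
  refine ⟨Arc a, {v : Fin (2 * a) | (v : ℕ) < a}, {v : Fin (2 * a) | a ≤ (v : ℕ)},
    ⟨?_, ?_, ?_⟩, ?_, ?_, ?_, ?_, ?_⟩
  · rw [Set.disjoint_left]
    intro v h1 h2
    simp only [Set.mem_setOf_eq] at h1 h2
    omega
  · rw [Set.eq_univ_iff_forall]
    intro v
    simp only [Set.mem_union, Set.mem_setOf_eq]
    omega
  · intro u v h
    unfold Arc at h
    have hu := u.2
    have hv := v.2
    simp only [Set.mem_setOf_eq]
    omega
  · have : {v : Fin (2 * a) | (v : ℕ) < a} = {v : Fin (2 * a) | 0 ≤ (v : ℕ) ∧ (v : ℕ) < a} := by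
      ext v; simp
    rw [this, ncard_interval _ _ _ (by omega) (by omega)]
    omega
  · have : {v : Fin (2 * a) | a ≤ (v : ℕ)} =
        {v : Fin (2 * a) | a ≤ (v : ℕ) ∧ (v : ℕ) < 2 * a} := by
      ext v
      simp only [Set.mem_setOf_eq]
      exact ⟨fun h => ⟨h, v.2⟩, fun h => h.1⟩
    rw [this, ncard_interval _ _ _ (by omega) (by omega)]
    omega
  · intro u v
    have : Std.Symm (Arc a) := ⟨fun x y h => arc_symm a h⟩
    exact ((Relation.ReflTransGen.symmetric (r := Arc a)).symm _ _ (reach_from_zero a ha u)).trans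
      (reach_from_zero a ha v)
  · rintro x y ⟨hxy, z, hxz, hyz⟩
    by_cases hx : (x : ℕ) ≠ 0 ∧ (x : ℕ) ≠ a
    · exact le_trans (deg_big a ha x hx.1 hx.2) (le_max_left _ _)
    by_cases hy : (y : ℕ) ≠ 0 ∧ (y : ℕ) ≠ a
    · exact le_trans (deg_big a ha y hy.1 hy.2) (le_max_right _ _)
    · exfalso
      have hxy' : (x : ℕ) ≠ (y : ℕ) := fun h => hxy (Fin.ext h)
      rw [not_and_or, not_ne_iff, not_ne_iff] at hx hy
      unfold Arc at hxz hyz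
      omega
  · rintro ⟨-, hc⟩
    have h0 : (0 : ℕ) < 2 * a := by omega
    have hmem_a : (⟨a, by omega⟩ : Fin (2 * a)) ∈ {u : Fin (2 * a) | u ≠ ⟨0, h0⟩} := by
      simp only [Set.mem_setOf_eq]
      exact fun h => by have := congrArg Fin.val h; simp at this; omega
    have hmem_1 : (⟨1, by omega⟩ : Fin (2 * a)) ∈ {u : Fin (2 * a) | u ≠ ⟨0, h0⟩} := by
      simp only [Set.mem_setOf_eq]
      exact fun h => by have := congrArg Fin.val h; simp at this
    have hiso : ∀ w, ¬ (SimpleGraph.induce {u : Fin (2 * a) | u ≠ ⟨0, h0⟩}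
        ⟨fun u v => u ≠ v ∧ (Arc a u v ∨ Arc a v u),
         by constructor; intro u v h; exact ⟨h.1.symm, h.2.symm⟩,
         by constructor; intro v h; exact h.1 rfl⟩).Adj ⟨⟨a, by omega⟩, hmem_a⟩ w := by
      rintro ⟨w, hw⟩ ⟨hne, harc⟩
      have hw0 : (w : ℕ) ≠ 0 := by
        intro h
        exact hw (Fin.ext (by simp only [Fin.val_mk]; omega))
      unfold Arc at harc
      simp at harc
      omega
    have hr := (hc ⟨0, h0⟩).preconnected ⟨⟨a, by omega⟩, hmem_a⟩ ⟨⟨1, by omega⟩, hmem_1⟩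
    have := isolated_eq hiso hr
    have h2 := congrArg (fun x => (x.1.val : ℕ)) this
    simp only [Fin.val_mk] at h2
    omega

/-- For every `a ≥ 4` there is a strongly connected balanced bipartite digraph of order
`2a` satisfying `max {d(x), d(y)} ≥ 2a − 2` for every dominating pair, whose underlying
undirected graph is not 2-connected. -/
theorem stmt12 (a : ℕ) (ha : 4 ≤ a) :
    ∃ (A : Fin (2 * a) → Fin (2 * a) → Prop) (X Y : Set (Fin (2 * a))),
      IsBipartition A X Y ∧ X.ncard = a ∧ Y.ncard = a ∧ StrongConn A ∧
      (∀ x y, DomPair A x y → 2 * a - 2 ≤ max (deg A x) (deg A y)) ∧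
      ¬ TwoConnected (UG A) := by
  obtain ⟨A, X, Y, h1, h2, h3, h4, h5, h6⟩ := stmt_aux a ha
  exact ⟨A, X, Y, h1, h2, h3, h4, h5, h6⟩
end
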